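/- Let (T, N, S) be an ON-structure on a bimodule (V; L, R) over a pre-Lie algebra (g,·). Then for all k ∈ ℕ, T_k = N^k ∘ T is an O-operator, and for all k, l ∈ ℕ, T_k and T_l are compatible (any linear combination of T_k and T_l is an O-operator). -/
import Mathlib


def PreLieFn {g : Type*} [AddCommGroup g] (m : g → g → g) : Prop :=
  ∀ x y z : g, m (m x y) z - m x (m y z) = m (m y x) z - m y (m x z)

def BimodFn {g V : Type*} [AddCommGroup g] [AddCommGroup V]
    (m : g → g → g) (L R : g → V → V) : Prop :=
  (∀ (x y : g) (u : V), L x (L y u) - L (m x y) u = L y (L x u) - L (m y x) u) ∧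
  (∀ (x y : g) (u : V), L x (R y u) - R y (L x u) = R (m x y) u - R y (R x u))

def NijFn {g : Type*} [AddCommGroup g] (m : g → g → g) (N : g → g) : Prop :=
  ∀ x y : g, m (N x) (N y) = N (m (N x) y + m x (N y) - N (m x y))

def IsOOp {K g V : Type*} [Field K] [AddCommGroup g] [Module K g]
    [AddCommGroup V] [Module K V]
    (m : g →ₗ[K] g →ₗ[K] g) (L R : g →ₗ[K] Module.End K V) (T : V →ₗ[K] g) : Prop :=
  ∀ u v : V, m (T u) (T v) = T (L (T u) v + R (T v) u)

/-- for an ON-structure (T,N,S), every T_k = N^k ∘ T is an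
O-operator, and any two of them are compatible. -/
theorem on_structure_hierarchy {K g V : Type*} [Field K]
    [AddCommGroup g] [Module K g] [AddCommGroup V] [Module K V]
    (m : g →ₗ[K] g →ₗ[K] g) (hm : PreLieFn (fun x y => m x y))
    (L R : g →ₗ[K] Module.End K V)
    (hb : BimodFn (fun x y => m x y) (fun x u => L x u) (fun x u => R x u))
    (T : V →ₗ[K] g) (hT : IsOOp m L R T)
    (N : Module.End K g) (S : Module.End K V)
    (hN : NijFn (fun x y => m x y) N)
    (hLS : ∀ (x : g) (v : V),
      L (N x) (S v) = S (L (N x) v) + L x (S (S v)) - S (L x (S v)))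
    (hRS : ∀ (x : g) (v : V),
      R (N x) (S v) = S (R (N x) v) + R x (S (S v)) - S (R x (S v)))
    (hNT : ∀ v : V, N (T v) = T (S v))
    (hmul : ∀ u v : V,
      L (N (T u)) v + R (N (T v)) u =
      (L (T (S u)) v + R (T v) (S u)) + (L (T u) (S v) + R (T (S v)) u) -
        S (L (T u) v + R (T v) u)) :
    (∀ k : ℕ, IsOOp m L R ((N ^ k) ∘ₗ T)) ∧
    (∀ (k l : ℕ) (a b : K), IsOOp m L R (a • ((N ^ k) ∘ₗ T) + b • ((N ^ l) ∘ₗ T))) := by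
  -- N^k ∘ T = T ∘ S^k
  have hNTk : ∀ (k : ℕ) (w : V), (N ^ k) (T w) = T ((S ^ k) w) := by
    intro k
    induction k with
    | zero => intro w; simp
    | succ k ih =>
      intro w
      rw [pow_succ, Module.End.mul_apply, hNT, ih, ← Module.End.mul_apply, ← pow_succ]
  -- one-step swap lemma for L
  have hA1 : ∀ u v : V, S (L (T (S u)) v) - L (T (S u)) (S v)
      = S (L (T u) (S v)) - L (T u) (S (S v)) := by
    intro u v
    have h := hLS (T u) v
    rw [hNT] at h
    rw [h]; abel
  -- one-step swap lemma for R
  have hB1 : ∀ u v : V, S (R (T (S v)) u) - R (T (S v)) (S u)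
      = S (R (T v) (S u)) - R (T v) (S (S u)) := by
    intro u v
    have h := hRS (T v) u
    rw [hNT] at h
    rw [h]; abel
  -- iterated swap lemma for L
  have hA : ∀ (p : ℕ) (u v : V), S (L (T ((S ^ p) u)) v) - L (T ((S ^ p) u)) (S v)
      = S (L (T u) ((S ^ p) v)) - L (T u) (S ((S ^ p) v)) := by
    intro p
    induction p with
    | zero => intro u v; simp
    | succ p ih =>
      intro u v
      have e1 : (S ^ (p+1)) u = (S ^ p) (S u) := by rw [pow_succ, Module.End.mul_apply]
      have e2 : (S ^ (p+1)) v = S ((S ^ p) v) := by rw [pow_succ', Module.End.mul_apply]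
      rw [e1, ih (S u) v, hA1 u ((S ^ p) v), e2]
  -- iterated swap lemma for R
  have hB : ∀ (p : ℕ) (u v : V), S (R (T ((S ^ p) v)) u) - R (T ((S ^ p) v)) (S u)
      = S (R (T v) ((S ^ p) u)) - R (T v) (S ((S ^ p) u)) := by
    intro p
    induction p with
    | zero => intro u v; simp
    | succ p ih =>
      intro u v
      have e1 : (S ^ (p+1)) v = (S ^ p) (S v) := by rw [pow_succ, Module.End.mul_apply]
      have e2 : (S ^ (p+1)) u = S ((S ^ p) u) := by rw [pow_succ', Module.End.mul_apply]
      rw [e1, ih u (S v), hB1 ((S ^ p) u) v, e2]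
  -- basic S-distribution (from hmul)
  have key0 : ∀ u v : V, S (L (T u) v + R (T v) u) = L (T u) (S v) + R (T v) (S u) := by
    intro u v
    have h := hmul u v
    rw [hNT, hNT] at h
    have h2 : S (L (T u) v + R (T v) u)
        = ((L (T (S u)) v + R (T v) (S u)) + (L (T u) (S v) + R (T (S v)) u))
          - (L (T (S u)) v + R (T (S v)) u) := by
      rw [h]; abel
    rw [h2]; abel
  -- key lemma with separate powers
  have keyPQ : ∀ (p q : ℕ) (u v : V),
      S (L (T ((S ^ p) u)) ((S ^ q) v) + R (T ((S ^ p) v)) ((S ^ q) u))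
      = L (T ((S ^ p) u)) (S ((S ^ q) v)) + R (T ((S ^ p) v)) (S ((S ^ q) u)) := by
    intro p q u v
    have hpq : ∀ w : V, (S ^ p) ((S ^ q) w) = (S ^ (p + q)) w := by
      intro w; rw [pow_add, Module.End.mul_apply]
    have a1 := hA p u ((S ^ q) v)
    have b1 := hB p ((S ^ q) u) v
    rw [hpq] at a1 b1
    have b2 := hB (p + q) u v
    have k0 := key0 u ((S ^ (p + q)) v)
    rw [map_add] at k0
    -- Q + Q' = 0
    have hQQ : (S (L (T u) ((S ^ (p+q)) v)) - L (T u) (S ((S ^ (p+q)) v)))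
        + (S (R (T v) ((S ^ (p+q)) u)) - R (T v) (S ((S ^ (p+q)) u))) = 0 := by
      rw [← b2, sub_add_sub_comm, k0, sub_self]
    apply eq_of_sub_eq_zero
    rw [map_add, ← sub_add_sub_comm, a1, b1]
    exact hQQ
  -- iterated S-distribution
  have SG : ∀ (q p : ℕ) (u v : V),
      (S ^ q) (L (T ((S ^ p) u)) v + R (T ((S ^ p) v)) u)
      = L (T ((S ^ p) u)) ((S ^ q) v) + R (T ((S ^ p) v)) ((S ^ q) u) := by
    intro q
    induction q with
    | zero => intro p u v; simp
    | succ q ih =>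
      intro p u v
      have e : ∀ w : V, (S ^ (q+1)) w = S ((S ^ q) w) := fun w => by
        rw [pow_succ', Module.End.mul_apply]
      rw [e, ih, keyPQ, ← e, ← e]
  -- main compatibility statement
  have main : ∀ (k l : ℕ) (a b : K),
      IsOOp m L R (a • ((N ^ k) ∘ₗ T) + b • ((N ^ l) ∘ₗ T)) := by
    intro k l a b u v
    simp only [LinearMap.add_apply, LinearMap.smul_apply, LinearMap.coe_comp,
      Function.comp_apply, hNTk]
    have expand : ∀ x y : V,
        L (a • T ((S ^ k) x) + b • T ((S ^ l) x)) y
          + R (a • T ((S ^ k) y) + b • T ((S ^ l) y)) x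
        = a • (L (T ((S ^ k) x)) y + R (T ((S ^ k) y)) x)
          + b • (L (T ((S ^ l) x)) y + R (T ((S ^ l) y)) x) := by
      intro x y
      simp only [map_add, map_smul, LinearMap.add_apply, LinearMap.smul_apply, smul_add]
      abel
    rw [expand u v]
    have dK : (S ^ k) (a • (L (T ((S ^ k) u)) v + R (T ((S ^ k) v)) u)
          + b • (L (T ((S ^ l) u)) v + R (T ((S ^ l) v)) u))
        = a • (L (T ((S ^ k) u)) ((S ^ k) v) + R (T ((S ^ k) v)) ((S ^ k) u))
          + b • (L (T ((S ^ l) u)) ((S ^ k) v) + R (T ((S ^ l) v)) ((S ^ k) u)) := by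
      rw [map_add, map_smul, map_smul, SG k k u v, SG k l u v]
    have dL : (S ^ l) (a • (L (T ((S ^ k) u)) v + R (T ((S ^ k) v)) u)
          + b • (L (T ((S ^ l) u)) v + R (T ((S ^ l) v)) u))
        = a • (L (T ((S ^ k) u)) ((S ^ l) v) + R (T ((S ^ k) v)) ((S ^ l) u))
          + b • (L (T ((S ^ l) u)) ((S ^ l) v) + R (T ((S ^ l) v)) ((S ^ l) u)) := by
      rw [map_add, map_smul, map_smul, SG l k u v, SG l l u v]
    rw [dK, dL]
    simp only [map_add, map_smul, LinearMap.add_apply, LinearMap.smul_apply]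
    rw [hT ((S ^ k) u) ((S ^ k) v), hT ((S ^ k) u) ((S ^ l) v),
      hT ((S ^ l) u) ((S ^ k) v), hT ((S ^ l) u) ((S ^ l) v)]
    simp only [map_add, map_smul, smul_add]
    module
  refine ⟨fun k => ?_, main⟩
  have h := main k k 1 0
  simpa using h
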